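/- For each of the five cases (A_{2ℓ-1}, D_k, E_6, E_7, E_8) with Q as in the theorem and K determined by adjunction K·X + X² = -2 on each generating rational curve, one has K·Q + Q² = |Γ| - 4, hence a rational (genus 0) curve in the class Q with only simple nodes must have exactly |Γ|/2 - 1 nodes, where |Γ| = 2ℓ, 4(k-2), 24, 48, 120 respectively. -/
import Mathlib


open Matrix

/-- A_{2ℓ-1} Gram matrix on C, D₁, D₂. -/
def gA (ℓ : ℚ) : Matrix (Fin 3) (Fin 3) ℚ := !![0, 1, 1; 1, -ℓ, 0; 1, 0, -ℓ]
def bA (ℓ : ℚ) (v w : Fin 3 → ℚ) : ℚ := v ⬝ᵥ (gA ℓ).mulVec w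

/-- D_k Gram matrix on C, E, F, G. -/
def gD (k : ℚ) : Matrix (Fin 4) (Fin 4) ℚ :=
  !![-1, 1, 1, 1; 1, -(k-2), 0, 0; 1, 0, -2, 0; 1, 0, 0, -2]
def bD (k : ℚ) (v w : Fin 4 → ℚ) : ℚ := v ⬝ᵥ (gD k).mulVec w

/-- E_k Gram matrix on C, E, F, G. -/
def gE (k : ℚ) : Matrix (Fin 4) (Fin 4) ℚ :=
  !![-1, 1, 1, 1; 1, 3 - k, 0, 0; 1, 0, -2, 0; 1, 0, 0, -3]
def bE (k : ℚ) (v w : Fin 4 → ℚ) : ℚ := v ⬝ᵥ (gE k).mulVec w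

/-- In each of the five cases, with K determined by adjunction K·X = -X² - 2 on the
generating curves, one has K·Q + Q² = |Γ| - 4; hence a rational nodal curve in the
class Q, whose node count δ satisfies 2δ - 2 = K·Q + Q², has δ = |Γ|/2 - 1 nodes. -/
theorem nodal_count :
    (∀ ℓ : ℚ, 1 ≤ ℓ → ∀ K : Fin 3 → ℚ,
      bA ℓ K ![1,0,0] = -2 → bA ℓ K ![0,1,0] = ℓ - 2 → bA ℓ K ![0,0,1] = ℓ - 2 →
      bA ℓ K ![ℓ,1,1] + bA ℓ ![ℓ,1,1] ![ℓ,1,1] = 2*ℓ - 4 ∧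
      ∀ δ : ℚ, 2*δ - 2 = bA ℓ K ![ℓ,1,1] + bA ℓ ![ℓ,1,1] ![ℓ,1,1] → δ = 2*ℓ/2 - 1) ∧
    (∀ k : ℚ, 3 ≤ k → ∀ K : Fin 4 → ℚ,
      bD k K ![1,0,0,0] = -1 → bD k K ![0,1,0,0] = k - 4 →
      bD k K ![0,0,1,0] = 0 → bD k K ![0,0,0,1] = 0 →
      bD k K ![2*k-4,2,k-2,k-2] + bD k ![2*k-4,2,k-2,k-2] ![2*k-4,2,k-2,k-2]
        = 4*(k-2) - 4 ∧
      ∀ δ : ℚ, 2*δ - 2 = bD k K ![2*k-4,2,k-2,k-2]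
          + bD k ![2*k-4,2,k-2,k-2] ![2*k-4,2,k-2,k-2] → δ = 4*(k-2)/2 - 1) ∧
    (∀ K : Fin 4 → ℚ,
      bE 6 K ![1,0,0,0] = -1 → bE 6 K ![0,1,0,0] = 1 →
      bE 6 K ![0,0,1,0] = 0 → bE 6 K ![0,0,0,1] = 1 →
      bE 6 K ![12,4,6,4] + bE 6 ![12,4,6,4] ![12,4,6,4] = 24 - 4 ∧
      ∀ δ : ℚ, 2*δ - 2 = bE 6 K ![12,4,6,4] + bE 6 ![12,4,6,4] ![12,4,6,4] →
        δ = 24/2 - 1) ∧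
    (∀ K : Fin 4 → ℚ,
      bE 7 K ![1,0,0,0] = -1 → bE 7 K ![0,1,0,0] = 2 →
      bE 7 K ![0,0,1,0] = 0 → bE 7 K ![0,0,0,1] = 1 →
      bE 7 K ![24,6,12,8] + bE 7 ![24,6,12,8] ![24,6,12,8] = 48 - 4 ∧
      ∀ δ : ℚ, 2*δ - 2 = bE 7 K ![24,6,12,8] + bE 7 ![24,6,12,8] ![24,6,12,8] →
        δ = 48/2 - 1) ∧
    (∀ K : Fin 4 → ℚ,
      bE 8 K ![1,0,0,0] = -1 → bE 8 K ![0,1,0,0] = 3 →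
      bE 8 K ![0,0,1,0] = 0 → bE 8 K ![0,0,0,1] = 1 →
      bE 8 K ![60,12,30,20] + bE 8 ![60,12,30,20] ![60,12,30,20] = 120 - 4 ∧
      ∀ δ : ℚ, 2*δ - 2 = bE 8 K ![60,12,30,20]
          + bE 8 ![60,12,30,20] ![60,12,30,20] → δ = 120/2 - 1) := by
  refine ⟨?_, ?_, ?_, ?_, ?_⟩
  · intro ℓ hl K h1 h2 h3
    have e : bA ℓ K ![ℓ,1,1] + bA ℓ ![ℓ,1,1] ![ℓ,1,1] = 2*ℓ - 4 := by
      simp only [bA, gA, Matrix.mulVec, dotProduct, Fin.sum_univ_three, Matrix.cons_val', Matrix.cons_val_zero, Matrix.cons_val_one, Matrix.head_cons, Matrix.head_fin_const, Matrix.cons_val_fin_one, Matrix.empty_val', Matrix.cons_val_two, Matrix.tail_cons, Matrix.of_apply] at h1 h2 h3 ⊢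
      linear_combination ℓ*h1 + h2 + h3
    exact ⟨e, fun δ h => by rw [e] at h; linarith⟩
  · intro k hk K h1 h2 h3 h4
    have e : bD k K ![2*k-4,2,k-2,k-2] + bD k ![2*k-4,2,k-2,k-2] ![2*k-4,2,k-2,k-2] = 4*(k-2) - 4 := by
      simp only [bD, gD, Matrix.mulVec, dotProduct, Fin.sum_univ_four, Matrix.cons_val', Matrix.cons_val_zero, Matrix.cons_val_one, Matrix.head_cons, Matrix.head_fin_const, Matrix.cons_val_fin_one, Matrix.empty_val', Matrix.cons_val_two, Matrix.cons_val_three, Matrix.tail_cons, Matrix.of_apply] at h1 h2 h3 h4 ⊢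
      linear_combination (2*k-4)*h1 + 2*h2 + (k-2)*h3 + (k-2)*h4
    exact ⟨e, fun δ h => by rw [e] at h; linarith⟩
  · intro K h1 h2 h3 h4
    have e : bE 6 K ![12,4,6,4] + bE 6 ![12,4,6,4] ![12,4,6,4] = 24 - 4 := by
      simp only [bE, gE, Matrix.mulVec, dotProduct, Fin.sum_univ_four, Matrix.cons_val', Matrix.cons_val_zero, Matrix.cons_val_one, Matrix.head_cons, Matrix.head_fin_const, Matrix.cons_val_fin_one, Matrix.empty_val', Matrix.cons_val_two, Matrix.cons_val_three, Matrix.tail_cons, Matrix.of_apply] at h1 h2 h3 h4 ⊢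
      linear_combination 12*h1 + 4*h2 + 6*h3 + 4*h4
    exact ⟨e, fun δ h => by rw [e] at h; linarith⟩
  · intro K h1 h2 h3 h4
    have e : bE 7 K ![24,6,12,8] + bE 7 ![24,6,12,8] ![24,6,12,8] = 48 - 4 := by
      simp only [bE, gE, Matrix.mulVec, dotProduct, Fin.sum_univ_four, Matrix.cons_val', Matrix.cons_val_zero, Matrix.cons_val_one, Matrix.head_cons, Matrix.head_fin_const, Matrix.cons_val_fin_one, Matrix.empty_val', Matrix.cons_val_two, Matrix.cons_val_three, Matrix.tail_cons, Matrix.of_apply] at h1 h2 h3 h4 ⊢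
      linear_combination 24*h1 + 6*h2 + 12*h3 + 8*h4
    exact ⟨e, fun δ h => by rw [e] at h; linarith⟩
  · intro K h1 h2 h3 h4
    have e : bE 8 K ![60,12,30,20] + bE 8 ![60,12,30,20] ![60,12,30,20] = 120 - 4 := by
      simp only [bE, gE, Matrix.mulVec, dotProduct, Fin.sum_univ_four, Matrix.cons_val', Matrix.cons_val_zero, Matrix.cons_val_one, Matrix.head_cons, Matrix.head_fin_const, Matrix.cons_val_fin_one, Matrix.empty_val', Matrix.cons_val_two, Matrix.cons_val_three, Matrix.tail_cons, Matrix.of_apply] at h1 h2 h3 h4 ⊢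
      linear_combination 60*h1 + 12*h2 + 30*h3 + 20*h4
    exact ⟨e, fun δ h => by rw [e] at h; linarith⟩
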